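/- arXiv:1510.01591 — 2 statements merged into one kernel-verified Lean document; each statement's English description precedes it below -/
import Mathlib

section
/- Let n = sl, let τ_{s,l} be the quasi-cyclic shift on R^n, and let Γ be the map on Z₃^{3n} that applies the block shift μ separately to each of the three length-n blocks. Then φ ∘ τ_{s,l} = Γ ∘ φ as maps from R^n to Z₃^{3n}. -/
/-- The ring `R = Z₃ + vZ₃ + v²Z₃ = Z₃[v]/(v³ - v)`, with elements written
`a + v*b + v²*c` for `a b c : ZMod 3` (stored as the three coordinates). -/
@[ext]
structure R3 : Type where
  a : ZMod 3
  b : ZMod 3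
  c : ZMod 3
  deriving DecidableEq

namespace R3

instance : Zero R3 := ⟨⟨0, 0, 0⟩⟩
instance : One R3 := ⟨⟨1, 0, 0⟩⟩
instance : Add R3 := ⟨fun x y => ⟨x.a + y.a, x.b + y.b, x.c + y.c⟩⟩
instance : Neg R3 := ⟨fun x => ⟨-x.a, -x.b, -x.c⟩⟩
/-- Multiplication induced by `v³ = v` :
`(a+vb+v²c)(a'+vb'+v²c') = aa' + v(ab'+a'b+bc'+b'c) + v²(ac'+a'c+bb'+cc')`. -/
instance : Mul R3 := ⟨fun x y =>
  ⟨x.a * y.a,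
   x.a * y.b + x.b * y.a + x.b * y.c + x.c * y.b,
   x.a * y.c + x.c * y.a + x.b * y.b + x.c * y.c⟩⟩

@[simp] lemma zero_a : (0 : R3).a = 0 := rfl
@[simp] lemma zero_b : (0 : R3).b = 0 := rfl
@[simp] lemma zero_c : (0 : R3).c = 0 := rfl
@[simp] lemma one_a : (1 : R3).a = 1 := rfl
@[simp] lemma one_b : (1 : R3).b = 0 := rfl
@[simp] lemma one_c : (1 : R3).c = 0 := rfl
@[simp] lemma add_a (x y : R3) : (x + y).a = x.a + y.a := rfl
@[simp] lemma add_b (x y : R3) : (x + y).b = x.b + y.b := rfl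
@[simp] lemma add_c (x y : R3) : (x + y).c = x.c + y.c := rfl
@[simp] lemma neg_a (x : R3) : (-x).a = -x.a := rfl
@[simp] lemma neg_b (x : R3) : (-x).b = -x.b := rfl
@[simp] lemma neg_c (x : R3) : (-x).c = -x.c := rfl
@[simp] lemma mul_a (x y : R3) : (x * y).a = x.a * y.a := rfl
@[simp] lemma mul_b (x y : R3) :
    (x * y).b = x.a * y.b + x.b * y.a + x.b * y.c + x.c * y.b := rfl
@[simp] lemma mul_c (x y : R3) :
    (x * y).c = x.a * y.c + x.c * y.a + x.b * y.b + x.c * y.c := rfl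

private lemma thm_add_assoc (x y z : R3) : x + y + z = x + (y + z) := by ext <;> simp <;> ring
private lemma thm_zero_add (x : R3) : 0 + x = x := by ext <;> simp
private lemma thm_add_zero (x : R3) : x + 0 = x := by ext <;> simp
private lemma thm_add_comm (x y : R3) : x + y = y + x := by ext <;> simp <;> ring
private lemma thm_mul_assoc (x y z : R3) : x * y * z = x * (y * z) := by ext <;> simp <;> ring
private lemma thm_one_mul (x : R3) : 1 * x = x := by ext <;> simp
private lemma thm_mul_one (x : R3) : x * 1 = x := by ext <;> simp
private lemma thm_left_distrib (x y z : R3) : x * (y + z) = x * y + x * z := by ext <;> simp <;> ring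
private lemma thm_right_distrib (x y z : R3) : (x + y) * z = x * z + y * z := by ext <;> simp <;> ring
private lemma thm_mul_comm (x y : R3) : x * y = y * x := by ext <;> simp <;> ring
private lemma thm_zero_mul (x : R3) : 0 * x = 0 := by ext <;> simp
private lemma thm_mul_zero (x : R3) : x * 0 = 0 := by ext <;> simp
private lemma thm_neg_add_cancel (x : R3) : -x + x = 0 := by ext <;> simp

instance : CommRing R3 where
  nsmul m x := ⟨m • x.a, m • x.b, m • x.c⟩
  nsmul_zero x := by ext <;> exact zero_nsmul _
  nsmul_succ m x := by ext <;> exact succ_nsmul _ _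
  zsmul m x := ⟨m • x.a, m • x.b, m • x.c⟩
  zsmul_zero' x := by ext <;> exact zero_zsmul _
  zsmul_succ' m x := by ext <;> exact SubNegMonoid.zsmul_succ' _ _
  zsmul_neg' m x := by ext <;> exact SubNegMonoid.zsmul_neg' _ _
  add_assoc := thm_add_assoc
  zero_add := thm_zero_add
  add_zero := thm_add_zero
  add_comm := thm_add_comm
  mul_assoc := thm_mul_assoc
  one_mul := thm_one_mul
  mul_one := thm_mul_one
  left_distrib := thm_left_distrib
  right_distrib := thm_right_distrib
  mul_comm := thm_mul_comm
  zero_mul := thm_zero_mul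
  mul_zero := thm_mul_zero
  neg_add_cancel := thm_neg_add_cancel

/-- The element `v` of `R = Z₃[v]/(v³-v)`. -/
def v : R3 := ⟨0, 1, 0⟩

/-- The natural inclusion `Z₃ → R`. -/
def iota : ZMod 3 →+* R3 where
  toFun t := ⟨t, 0, 0⟩
  map_one' := by ext <;> simp
  map_mul' x y := by ext <;> simp
  map_zero' := by ext <;> simp
  map_add' x y := by ext <;> simp

instance : Algebra (ZMod 3) R3 := iota.toAlgebra

end R3

open R3 in
/-- The Gray map `φ : R → Z₃³`, `φ(a+vb+v²c) = (a, a+b+c, a+2b+c)`. -/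
def gray (r : R3) : ZMod 3 × ZMod 3 × ZMod 3 :=
  (r.a, r.a + r.b + r.c, r.a + 2 * r.b + r.c)

/-- The Gray map extended blockwise to `φ : R^n → Z₃^{3n}`, where `Z₃^{3n}` is
identified with `Z₃^n × Z₃^n × Z₃^n` via the three length-`n` blocks. -/
def grayV {n : ℕ} (r : Fin n → R3) :
    (Fin n → ZMod 3) × (Fin n → ZMod 3) × (Fin n → ZMod 3) :=
  (fun i => (r i).a,
   fun i => (r i).a + (r i).b + (r i).c,
   fun i => (r i).a + 2 * (r i).b + (r i).c)

/-- Hamming weight on `Z₃^{3n} = Z₃^n × Z₃^n × Z₃^n`. -/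
def wtH {n : ℕ} (x : (Fin n → ZMod 3) × (Fin n → ZMod 3) × (Fin n → ZMod 3)) : ℕ :=
  hammingNorm x.1 + hammingNorm x.2.1 + hammingNorm x.2.2

/-- The Lee weight of an element of `R`: the Hamming weight of its Gray image. -/
def wtLee (r : R3) : ℕ :=
  (if r.a ≠ 0 then 1 else 0) + (if r.a + r.b + r.c ≠ 0 then 1 else 0) +
    (if r.a + 2 * r.b + r.c ≠ 0 then 1 else 0)

/-- The Lee weight on `R^n`, extended additively. -/
def wtLeeV {n : ℕ} (x : Fin n → R3) : ℕ := ∑ i, wtLee (x i)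

/-- The cyclic shift `σ(c₀,…,c_{n-1}) = (c_{n-1},c₀,…,c_{n-2})`. -/
def cyc {α : Type*} {n : ℕ} [NeZero n] (c : Fin n → α) : Fin n → α :=
  fun i => c (i - 1)

/-- The negacyclic shift `η(c₀,…,c_{n-1}) = (-c_{n-1},c₀,…,c_{n-2})`. -/
def nega {α : Type*} [Neg α] {n : ℕ} [NeZero n] (c : Fin n → α) : Fin n → α :=
  fun i => if i = 0 then -c (i - 1) else c (i - 1)

/-- The `λ`-constacyclic shift `(c₀,…,c_{n-1}) ↦ (λc_{n-1},c₀,…,c_{n-2})`. -/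
def consta {α : Type*} [Mul α] {n : ℕ} [NeZero n] (lam : α) (c : Fin n → α) : Fin n → α :=
  fun i => if i = 0 then lam * c (i - 1) else c (i - 1)

open Fin.NatCast in
/-- The quasi-cyclic shift `τ_{s,l}` of block length `l` on vectors of length `n = s*l`,
moving the last block of `l` coordinates to the front; equivalently, the cyclic shift
by `l` positions. -/
def shiftBy {α : Type*} {n : ℕ} [NeZero n] (l : ℕ) (c : Fin n → α) : Fin n → α :=
  fun i => c (i - (l : Fin n))

/-- Apply a map to each of the three blocks of `Z₃^{3n} = Z₃^n × Z₃^n × Z₃^n`. -/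
def blockMap {n : ℕ} (f : (Fin n → ZMod 3) → (Fin n → ZMod 3))
    (x : (Fin n → ZMod 3) × (Fin n → ZMod 3) × (Fin n → ZMod 3)) :
    (Fin n → ZMod 3) × (Fin n → ZMod 3) × (Fin n → ZMod 3) :=
  (f x.1, f x.2.1, f x.2.2)

/-- The Euclidean dual of a linear code over `R`. -/
def dualR {n : ℕ} (C : Submodule R3 (Fin n → R3)) : Submodule R3 (Fin n → R3) where
  carrier := {x | ∀ y ∈ C, ∑ i, x i * y i = 0}
  add_mem' := by
    intro p q hp hq y hy
    simp only [Set.mem_setOf_eq] at *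
    simp [Pi.add_apply, add_mul, Finset.sum_add_distrib, hp y hy, hq y hy]
  zero_mem' := by intro y hy; simp
  smul_mem' := by
    intro r p hp y hy
    simp only [Set.mem_setOf_eq] at *
    simp [Pi.smul_apply, smul_eq_mul, mul_assoc, ← Finset.mul_sum, hp y hy]

/-- The Euclidean dual of a ternary linear code. -/
def dualZ {n : ℕ} (C : Submodule (ZMod 3) (Fin n → ZMod 3)) :
    Submodule (ZMod 3) (Fin n → ZMod 3) where
  carrier := {x | ∀ y ∈ C, ∑ i, x i * y i = 0}
  add_mem' := by
    intro p q hp hq y hy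
    simp only [Set.mem_setOf_eq] at *
    simp [Pi.add_apply, add_mul, Finset.sum_add_distrib, hp y hy, hq y hy]
  zero_mem' := by intro y hy; simp
  smul_mem' := by
    intro r p hp y hy
    simp only [Set.mem_setOf_eq] at *
    simp [Pi.smul_apply, smul_eq_mul, mul_assoc, ← Finset.mul_sum, hp y hy]

/-- The Euclidean inner product on `Z₃^{3n} = Z₃^n × Z₃^n × Z₃^n`. -/
def inner3 {n : ℕ} (x y : (Fin n → ZMod 3) × (Fin n → ZMod 3) × (Fin n → ZMod 3)) : ZMod 3 :=
  ∑ i, x.1 i * y.1 i + ∑ i, x.2.1 i * y.2.1 i + ∑ i, x.2.2 i * y.2.2 i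

/-- The Euclidean dual (as a set) of a subset of `Z₃^{3n}`. -/
def dual3Set {n : ℕ} (S : Set ((Fin n → ZMod 3) × (Fin n → ZMod 3) × (Fin n → ZMod 3))) :
    Set ((Fin n → ZMod 3) × (Fin n → ZMod 3) × (Fin n → ZMod 3)) :=
  {x | ∀ y ∈ S, inner3 x y = 0}

/-- The first associated ternary code `C₁ = {a : ∃ b c, a+vb+v²c ∈ C}`. -/
def assoc1 {n : ℕ} (C : Set (Fin n → R3)) : Set (Fin n → ZMod 3) :=
  {x | ∃ r ∈ C, ∀ i, x i = (r i).a}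

/-- The second associated ternary code `C₂ = {a+b+c : a+vb+v²c ∈ C}`. -/
def assoc2 {n : ℕ} (C : Set (Fin n → R3)) : Set (Fin n → ZMod 3) :=
  {x | ∃ r ∈ C, ∀ i, x i = (r i).a + (r i).b + (r i).c}

/-- The third associated ternary code `C₃ = {a+2b+c : a+vb+v²c ∈ C}`. -/
def assoc3 {n : ℕ} (C : Set (Fin n → R3)) : Set (Fin n → ZMod 3) :=
  {x | ∃ r ∈ C, ∀ i, x i = (r i).a + 2 * (r i).b + (r i).c}

/-- The idempotent `e₁ = 1 + 2v²` of `R`. -/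
noncomputable def e1 : R3 := 1 + 2 * R3.v ^ 2
/-- The idempotent `e₂ = 2v + 2v²` of `R`. -/
noncomputable def e2 : R3 := 2 * R3.v + 2 * R3.v ^ 2
/-- The idempotent `e₃ = v + 2v²` of `R`. -/
noncomputable def e3 : R3 := R3.v + 2 * R3.v ^ 2

/-- Coordinatewise inclusion `Z₃^n → R^n`. -/
def emb {n : ℕ} (x : Fin n → ZMod 3) : Fin n → R3 := fun i => R3.iota (x i)

/-- The code `(1+2v²)C₁ ⊕ (2v+2v²)C₂ ⊕ (v+2v²)C₃ ⊆ R^n` built from three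
ternary codes `C₁, C₂, C₃ ⊆ Z₃^n`. -/
def tri {n : ℕ} (C₁ C₂ C₃ : Set (Fin n → ZMod 3)) : Set (Fin n → R3) :=
  {w | ∃ x ∈ C₁, ∃ y ∈ C₂, ∃ z ∈ C₃, w = e1 • emb x + e2 • emb y + e3 • emb z}

open Polynomial in
/-- The polynomial representation `(c₀,…,c_{n-1}) ↦ c₀ + c₁x + … + c_{n-1}x^{n-1}`
of a vector over `Z₃`. -/
noncomputable def toPolyZ {n : ℕ} (c : Fin n → ZMod 3) : Polynomial (ZMod 3) :=
  ∑ i : Fin n, Polynomial.C (c i) * Polynomial.X ^ (i : ℕ)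

open Polynomial in
/-- The polynomial representation of a vector over `R`. -/
noncomputable def toPolyR {n : ℕ} (c : Fin n → R3) : Polynomial R3 :=
  ∑ i : Fin n, Polynomial.C (c i) * Polynomial.X ^ (i : ℕ)

/-- The quotient map `Z₃[x] → Z₃[x]/(xⁿ - ε)`. -/
noncomputable def mkZ (n : ℕ) (ε : ZMod 3) :
    Polynomial (ZMod 3) →+*
      Polynomial (ZMod 3) ⧸ Ideal.span {Polynomial.X ^ n - Polynomial.C ε} :=
  Ideal.Quotient.mk _

/-- The quotient map `R[x] → R[x]/(xⁿ - ε)`. -/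
noncomputable def mkR (n : ℕ) (ε : R3) :
    Polynomial R3 →+* Polynomial R3 ⧸ Ideal.span {Polynomial.X ^ n - Polynomial.C ε} :=
  Ideal.Quotient.mk _

/-- `f` is the generator polynomial of the ternary cyclic (`ε = 1`) resp. negacyclic
(`ε = -1`) code `D` of length `n`: `f` is a monic divisor of `xⁿ - ε` and, under the
polynomial representation, `D` corresponds exactly to the ideal of `Z₃[x]/(xⁿ - ε)`
generated by `f`. -/
def IsGenPolyZ (n : ℕ) (ε : ZMod 3) (D : Set (Fin n → ZMod 3))
    (f : Polynomial (ZMod 3)) : Prop :=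
  f.Monic ∧ f ∣ (Polynomial.X ^ n - Polynomial.C ε) ∧
    {p | ∃ c ∈ D, p = mkZ n ε (toPolyZ c)} = ↑(Ideal.span {mkZ n ε f})

instance (a b : ℕ) [NeZero a] [NeZero b] : NeZero (a * b) :=
  ⟨Nat.mul_ne_zero (NeZero.ne a) (NeZero.ne b)⟩

/-- `φ ∘ τ_{s,l} = Γ ∘ φ`, where `τ_{s,l}` is the quasi-cyclic shift on
`R^{sl}` (moving the last block of length `l` to the front) and `Γ` applies the
corresponding block shift `μ` to each of the three length-`n` blocks of `Z₃^{3n}`. -/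
theorem statement4 (s l : ℕ) [NeZero s] [NeZero l] (e : Fin (s * l) → R3) :
    grayV (shiftBy l e) = blockMap (shiftBy l) (grayV e) := by
  rfl
end

section
/- Let C = (1+2v²)C₁ ⊕ (2v+2v²)C₂ ⊕ (v+2v²)C₃ be a linear code of length n over R, where C₁, C₂, C₃ are ternary linear codes of length n. Then C is a cyclic code over R if and only if C₁, C₂ and C₃ are cyclic codes over Z₃. -/
lemma tri_key1 : ∀ x y z : ZMod 3,
    (e1 * R3.iota x + e2 * R3.iota y + e3 * R3.iota z).a = x := by decide

lemma tri_key2 : ∀ x y z : ZMod 3,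
    (e1 * R3.iota x + e2 * R3.iota y + e3 * R3.iota z).a
      + (e1 * R3.iota x + e2 * R3.iota y + e3 * R3.iota z).b
      + (e1 * R3.iota x + e2 * R3.iota y + e3 * R3.iota z).c = y := by decide

lemma tri_key3 : ∀ x y z : ZMod 3,
    (e1 * R3.iota x + e2 * R3.iota y + e3 * R3.iota z).a
      + 2 * (e1 * R3.iota x + e2 * R3.iota y + e3 * R3.iota z).b
      + (e1 * R3.iota x + e2 * R3.iota y + e3 * R3.iota z).c = z := by decide

lemma tri_recon : ∀ a b c : ZMod 3,
    e1 * R3.iota a + e2 * R3.iota (a + b + c) + e3 * R3.iota (a + 2 * b + c)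
      = ⟨a, b, c⟩ := by decide

lemma combo_apply {n : ℕ} (x y z : Fin n → ZMod 3) (i : Fin n) :
    (e1 • emb x + e2 • emb y + e3 • emb z) i
      = e1 * R3.iota (x i) + e2 * R3.iota (y i) + e3 * R3.iota (z i) := rfl

lemma mem_tri_iff {n : ℕ} (S₁ S₂ S₃ : Set (Fin n → ZMod 3)) (w : Fin n → R3) :
    w ∈ tri S₁ S₂ S₃ ↔
      (fun i => (w i).a) ∈ S₁ ∧
      (fun i => (w i).a + (w i).b + (w i).c) ∈ S₂ ∧
      (fun i => (w i).a + 2 * (w i).b + (w i).c) ∈ S₃ := by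
  constructor
  · rintro ⟨x, hx, y, hy, z, hz, rfl⟩
    refine ⟨?_, ?_, ?_⟩
    · have : (fun i => ((e1 • emb x + e2 • emb y + e3 • emb z) i).a) = x := by
        funext i; rw [combo_apply]; exact tri_key1 _ _ _
      rw [this]; exact hx
    · have : (fun i => ((e1 • emb x + e2 • emb y + e3 • emb z) i).a
          + ((e1 • emb x + e2 • emb y + e3 • emb z) i).b
          + ((e1 • emb x + e2 • emb y + e3 • emb z) i).c) = y := by
        funext i; rw [combo_apply]; exact tri_key2 _ _ _
      rw [this]; exact hy
    · have : (fun i => ((e1 • emb x + e2 • emb y + e3 • emb z) i).a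
          + 2 * ((e1 • emb x + e2 • emb y + e3 • emb z) i).b
          + ((e1 • emb x + e2 • emb y + e3 • emb z) i).c) = z := by
        funext i; rw [combo_apply]; exact tri_key3 _ _ _
      rw [this]; exact hz
  · rintro ⟨h1, h2, h3⟩
    refine ⟨_, h1, _, h2, _, h3, ?_⟩
    funext i
    rw [combo_apply]
    exact (tri_recon (w i).a (w i).b (w i).c).symm

/-- Let `C = (1+2v²)C₁ ⊕ (2v+2v²)C₂ ⊕ (v+2v²)C₃` be a linear code of
length `n` over `R`, built from ternary linear codes `C₁, C₂, C₃`. Then `C` is cyclic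
over `R` iff `C₁`, `C₂` and `C₃` are cyclic over `Z₃`. -/
theorem statement8 (n : ℕ) [NeZero n] (C : Submodule R3 (Fin n → R3))
    (C₁ C₂ C₃ : Submodule (ZMod 3) (Fin n → ZMod 3))
    (hC : (C : Set (Fin n → R3)) = tri (C₁ : Set (Fin n → ZMod 3)) C₂ C₃) :
    cyc '' (C : Set (Fin n → R3)) = (C : Set (Fin n → R3)) ↔
      (cyc '' (C₁ : Set (Fin n → ZMod 3)) = (C₁ : Set (Fin n → ZMod 3)) ∧
       cyc '' (C₂ : Set (Fin n → ZMod 3)) = (C₂ : Set (Fin n → ZMod 3)) ∧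
       cyc '' (C₃ : Set (Fin n → ZMod 3)) = (C₃ : Set (Fin n → ZMod 3))) := by
  have memC : ∀ w : Fin n → R3, w ∈ C ↔
      (fun i => (w i).a) ∈ C₁ ∧
      (fun i => (w i).a + (w i).b + (w i).c) ∈ C₂ ∧
      (fun i => (w i).a + 2 * (w i).b + (w i).c) ∈ C₃ := by
    intro w
    rw [show (w ∈ C) = (w ∈ (C : Set (Fin n → R3))) from rfl, hC]
    exact mem_tri_iff _ _ _ w
  -- cyc commutes with the three projections (definitionally)
  have cyc1 : ∀ w : Fin n → R3,
      (fun i => ((cyc w) i).a) = cyc (fun i => (w i).a) := fun _ => rfl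
  have cyc2 : ∀ w : Fin n → R3,
      (fun i => ((cyc w) i).a + ((cyc w) i).b + ((cyc w) i).c)
        = cyc (fun i => (w i).a + (w i).b + (w i).c) := fun _ => rfl
  have cyc3 : ∀ w : Fin n → R3,
      (fun i => ((cyc w) i).a + 2 * ((cyc w) i).b + ((cyc w) i).c)
        = cyc (fun i => (w i).a + 2 * (w i).b + (w i).c) := fun _ => rfl
  constructor
  · intro hcyc
    -- given x in one of the codes, build the element of C with other components 0
    have combo_mem : ∀ x ∈ C₁, ∀ y ∈ C₂, ∀ z ∈ C₃,
        (e1 • emb x + e2 • emb y + e3 • emb z) ∈ C := by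
      intro x hx y hy z hz
      have : (e1 • emb x + e2 • emb y + e3 • emb z) ∈
          tri (C₁ : Set (Fin n → ZMod 3)) C₂ C₃ := ⟨x, hx, y, hy, z, hz, rfl⟩
      rw [show ((e1 • emb x + e2 • emb y + e3 • emb z) ∈ C)
        = ((e1 • emb x + e2 • emb y + e3 • emb z) ∈ (C : Set (Fin n → R3))) from rfl, hC]
      exact this
    have proj_combo1 : ∀ x y z : Fin n → ZMod 3,
        (fun i => ((e1 • emb x + e2 • emb y + e3 • emb z) i).a) = x := by
      intro x y z; funext i; rw [combo_apply]; exact tri_key1 _ _ _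
    have proj_combo2 : ∀ x y z : Fin n → ZMod 3,
        (fun i => ((e1 • emb x + e2 • emb y + e3 • emb z) i).a
          + ((e1 • emb x + e2 • emb y + e3 • emb z) i).b
          + ((e1 • emb x + e2 • emb y + e3 • emb z) i).c) = y := by
      intro x y z; funext i; rw [combo_apply]; exact tri_key2 _ _ _
    have proj_combo3 : ∀ x y z : Fin n → ZMod 3,
        (fun i => ((e1 • emb x + e2 • emb y + e3 • emb z) i).a
          + 2 * ((e1 • emb x + e2 • emb y + e3 • emb z) i).b
          + ((e1 • emb x + e2 • emb y + e3 • emb z) i).c) = z := by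
      intro x y z; funext i; rw [combo_apply]; exact tri_key3 _ _ _
    refine ⟨?_, ?_, ?_⟩
    · apply Set.Subset.antisymm
      · rintro _ ⟨x, hx, rfl⟩
        set w := e1 • emb x + e2 • emb (0 : Fin n → ZMod 3) + e3 • emb 0 with hwdef
        have hw : w ∈ C := combo_mem x hx 0 C₂.zero_mem 0 C₃.zero_mem
        have hcw : cyc w ∈ C := by
          rw [← SetLike.mem_coe, ← hcyc]; exact ⟨w, hw, rfl⟩
        have := ((memC (cyc w)).1 hcw).1
        rwa [cyc1, hwdef, proj_combo1] at this
      · intro x hx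
        set w := e1 • emb x + e2 • emb (0 : Fin n → ZMod 3) + e3 • emb 0 with hwdef
        have hw : w ∈ C := combo_mem x hx 0 C₂.zero_mem 0 C₃.zero_mem
        have : w ∈ cyc '' (C : Set (Fin n → R3)) := by rw [hcyc]; exact hw
        obtain ⟨w', hw', hww⟩ := this
        refine ⟨fun i => (w' i).a, ((memC w').1 hw').1, ?_⟩
        rw [← cyc1, hww, hwdef, proj_combo1]
    · apply Set.Subset.antisymm
      · rintro _ ⟨y, hy, rfl⟩
        set w := e1 • emb (0 : Fin n → ZMod 3) + e2 • emb y + e3 • emb 0 with hwdef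
        have hw : w ∈ C := combo_mem 0 C₁.zero_mem y hy 0 C₃.zero_mem
        have hcw : cyc w ∈ C := by
          rw [← SetLike.mem_coe, ← hcyc]; exact ⟨w, hw, rfl⟩
        have := ((memC (cyc w)).1 hcw).2.1
        rwa [cyc2, hwdef, proj_combo2] at this
      · intro y hy
        set w := e1 • emb (0 : Fin n → ZMod 3) + e2 • emb y + e3 • emb 0 with hwdef
        have hw : w ∈ C := combo_mem 0 C₁.zero_mem y hy 0 C₃.zero_mem
        have : w ∈ cyc '' (C : Set (Fin n → R3)) := by rw [hcyc]; exact hw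
        obtain ⟨w', hw', hww⟩ := this
        refine ⟨fun i => (w' i).a + (w' i).b + (w' i).c, ((memC w').1 hw').2.1, ?_⟩
        rw [← cyc2, hww, hwdef, proj_combo2]
    · apply Set.Subset.antisymm
      · rintro _ ⟨z, hz, rfl⟩
        set w := e1 • emb (0 : Fin n → ZMod 3) + e2 • emb 0 + e3 • emb z with hwdef
        have hw : w ∈ C := combo_mem 0 C₁.zero_mem 0 C₂.zero_mem z hz
        have hcw : cyc w ∈ C := by
          rw [← SetLike.mem_coe, ← hcyc]; exact ⟨w, hw, rfl⟩
        have := ((memC (cyc w)).1 hcw).2.2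
        rwa [cyc3, hwdef, proj_combo3] at this
      · intro z hz
        set w := e1 • emb (0 : Fin n → ZMod 3) + e2 • emb 0 + e3 • emb z with hwdef
        have hw : w ∈ C := combo_mem 0 C₁.zero_mem 0 C₂.zero_mem z hz
        have : w ∈ cyc '' (C : Set (Fin n → R3)) := by rw [hcyc]; exact hw
        obtain ⟨w', hw', hww⟩ := this
        refine ⟨fun i => (w' i).a + 2 * (w' i).b + (w' i).c, ((memC w').1 hw').2.2, ?_⟩
        rw [← cyc3, hww, hwdef, proj_combo3]
  · rintro ⟨h1, h2, h3⟩
    apply Set.Subset.antisymm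
    · rintro _ ⟨w, hw, rfl⟩
      obtain ⟨m1, m2, m3⟩ := (memC w).1 hw
      refine (memC (cyc w)).2 ⟨?_, ?_, ?_⟩
      · rw [cyc1, ← SetLike.mem_coe, ← h1]; exact ⟨_, m1, rfl⟩
      · rw [cyc2, ← SetLike.mem_coe, ← h2]; exact ⟨_, m2, rfl⟩
      · rw [cyc3, ← SetLike.mem_coe, ← h3]; exact ⟨_, m3, rfl⟩
    · intro w hw
      obtain ⟨m1, m2, m3⟩ := (memC w).1 hw
      have e1' : (fun i => (w i).a) ∈ cyc '' (C₁ : Set (Fin n → ZMod 3)) := by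
        rw [h1]; exact m1
      have e2' : (fun i => (w i).a + (w i).b + (w i).c)
          ∈ cyc '' (C₂ : Set (Fin n → ZMod 3)) := by rw [h2]; exact m2
      have e3' : (fun i => (w i).a + 2 * (w i).b + (w i).c)
          ∈ cyc '' (C₃ : Set (Fin n → ZMod 3)) := by rw [h3]; exact m3
      obtain ⟨y1, hy1, hy1'⟩ := e1'
      obtain ⟨y2, hy2, hy2'⟩ := e2'
      obtain ⟨y3, hy3, hy3'⟩ := e3'
      set w' := e1 • emb y1 + e2 • emb y2 + e3 • emb y3 with hwdef
      have hw'C : w' ∈ C := by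
        rw [show (w' ∈ C) = (w' ∈ (C : Set (Fin n → R3))) from rfl, hC]
        exact ⟨y1, hy1, y2, hy2, y3, hy3, rfl⟩
      refine ⟨w', hw'C, ?_⟩
      funext i
      have q1 : y1 (i - 1) = (w i).a := congrFun hy1' i
      have q2 : y2 (i - 1) = (w i).a + (w i).b + (w i).c := congrFun hy2' i
      have q3 : y3 (i - 1) = (w i).a + 2 * (w i).b + (w i).c := congrFun hy3' i
      show w' (i - 1) = w i
      rw [hwdef, combo_apply, q1, q2, q3, tri_recon]
end
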